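/- The set of vectors 𝔸_n = {0} ∪ {±e_i : 1 ≤ i ≤ n} ∪ {e_i - e_j : i ≠ j} in ℤⁿ is a maximal unimodular system: for any integer vector r ∉ 𝔸_n, the set 𝔸_n ∪ {r} is not unimodular. In particular, if 𝔸_n ∪ {r} is unimodular, then every coordinate of r lies in {0, ±1} and at most two coordinates are nonzero, with opposite signs. -/

import Mathlib

/-- A set of integer vectors is unimodular if every subset generates a pure subgroup. -/
def Unimodular {n : ℕ} (R : Set (Fin n → ℤ)) : Prop :=
  ∀ B ⊆ R, ∀ g : (Fin n → ℤ) ⧸ AddSubgroup.closure B, g ≠ 0 → ¬IsOfFinAddOrder g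

/-- The unimodular system `𝔸ₙ = {0} ∪ {±eᵢ} ∪ {eᵢ - eⱼ : i ≠ j}`. -/
def systemA (n : ℕ) : Set (Fin n → ℤ) :=
  {0} ∪ {v | ∃ i, v = Pi.single i 1 ∨ v = -Pi.single i 1} ∪
    {v | ∃ i j, i ≠ j ∧ v = Pi.single i 1 - Pi.single j 1}

lemma quot_not_torsionFree {n : ℕ} {B : Set (Fin n → ℤ)} {v : Fin n → ℤ} {m : ℕ}
    (hm : 0 < m) (h1 : v ∉ AddSubgroup.closure B) (h2 : m • v ∈ AddSubgroup.closure B) :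
    ¬ (∀ g : (Fin n → ℤ) ⧸ AddSubgroup.closure B, g ≠ 0 → ¬IsOfFinAddOrder g) := by
  intro ht
  refine ht (QuotientAddGroup.mk v) ?_ ?_
  · simpa [QuotientAddGroup.eq_zero_iff] using h1
  · rw [isOfFinAddOrder_iff_nsmul_eq_zero]
    refine ⟨m, hm, ?_⟩
    have : ((m • v : Fin n → ℤ) : (Fin n → ℤ) ⧸ AddSubgroup.closure B) = 0 := by
      rw [QuotientAddGroup.eq_zero_iff]; exact h2
    rw [QuotientAddGroup.mk_nsmul] at this; exact this

lemma not_mem_closure {n : ℕ} {B : Set (Fin n → ℤ)} {v : Fin n → ℤ} {M : Type} [AddCommGroup M]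
    (φ : (Fin n → ℤ) →+ M) (hB : ∀ b ∈ B, φ b = 0) (hv : φ v ≠ 0) :
    v ∉ AddSubgroup.closure B := by
  intro hmem
  exact hv ((AddSubgroup.closure_le φ.ker).2 (fun b hb => hB b hb) hmem)

lemma smul_single {n : ℕ} (j : Fin n) (c : ℤ) : c • (Pi.single j (1:ℤ) : Fin n → ℤ) = Pi.single j c := by
  funext x
  simp [Pi.single_apply, mul_ite]

lemma single_mem_closure {n : ℕ} (r : Fin n → ℤ) (i : Fin n)
    {B : Set (Fin n → ℤ)} (hr : r ∈ B)
    (hs : ∀ j, j ≠ i → Pi.single j (1:ℤ) ∈ B) :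
    Pi.single i (r i) ∈ AddSubgroup.closure B := by
  have hsum : ∑ j ∈ Finset.univ.erase i, Pi.single j (r j) ∈ AddSubgroup.closure B := by
    refine AddSubgroup.sum_mem _ (fun j hj => ?_)
    rw [← smul_single]
    exact AddSubgroup.zsmul_mem _ (AddSubgroup.subset_closure (hs j (Finset.ne_of_mem_erase hj))) _
  have hu : Pi.single i (r i) + ∑ j ∈ Finset.univ.erase i, Pi.single j (r j) = r :=
    (Finset.add_sum_erase Finset.univ (fun j => Pi.single j (r j)) (Finset.mem_univ i)).trans
      (Finset.univ_sum_single r)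
  have : Pi.single i (r i) = r - ∑ j ∈ Finset.univ.erase i, Pi.single j (r j) :=
    eq_sub_of_add_eq hu
  rw [this]
  exact AddSubgroup.sub_mem _ (AddSubgroup.subset_closure hr) hsum

lemma coord_lemma {n : ℕ} {r : Fin n → ℤ} (h : Unimodular (insert r (systemA n))) (i : Fin n) :
    r i = 0 ∨ r i = 1 ∨ r i = -1 := by
  by_contra hc
  push_neg at hc
  obtain ⟨h0, h1', h2'⟩ := hc
  set m := (r i).natAbs with hmdef
  have hm : 1 < m := by omega
  set B : Set (Fin n → ℤ) := insert r {v | ∃ j, j ≠ i ∧ v = Pi.single j (1:ℤ)} with hBdef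
  have hBsub : B ⊆ insert r (systemA n) := by
    rintro b (rfl | ⟨j, hj, rfl⟩)
    · exact Set.mem_insert _ _
    · exact Set.mem_insert_of_mem _ (Or.inl (Or.inr ⟨j, Or.inl rfl⟩))
  have hsingle : ∀ j, j ≠ i → Pi.single j (1:ℤ) ∈ B := fun j hj =>
    Set.mem_insert_of_mem _ ⟨j, hj, rfl⟩
  have hmem : Pi.single i (r i) ∈ AddSubgroup.closure B :=
    single_mem_closure r i (Set.mem_insert _ _) hsingle
  have h2 : m • Pi.single i (1:ℤ) ∈ AddSubgroup.closure B := by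
    have : (m : ℤ) • Pi.single i (1:ℤ) ∈ AddSubgroup.closure B := by
      rcases Int.natAbs_eq (r i) with he | he
      · rw [← he, smul_single]; exact hmem
      · have : (m : ℤ) • (Pi.single i (1:ℤ) : Fin n → ℤ) = -(Pi.single i (r i)) := by
          rw [← smul_single i (r i), he, neg_smul, neg_neg]
        rw [this]
        exact AddSubgroup.neg_mem _ hmem
    rwa [natCast_zsmul] at this
  have h1 : Pi.single i (1:ℤ) ∉ AddSubgroup.closure B := by
    haveI : Fact (1 < m) := ⟨hm⟩
    refine not_mem_closure (AddMonoidHom.mk' (M := Fin n → ℤ) (fun v => ((v i : ℤ) : ZMod m))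
      (fun a b => by push_cast; simp)) ?_ ?_
    · rintro b hb
      rcases hb with hb | ⟨j, hj, rfl⟩
      · simp only [AddMonoidHom.mk'_apply]
        subst hb
        rw [ZMod.intCast_zmod_eq_zero_iff_dvd, hmdef, Int.natCast_natAbs]
        exact (abs_dvd _ _).mpr dvd_rfl
      · simp [AddMonoidHom.mk'_apply, Pi.single_apply, hj.symm]
    · simp only [AddMonoidHom.mk'_apply, Pi.single_eq_same]
      push_cast
      exact one_ne_zero
  exact quot_not_torsionFree (by omega) h1 h2 (h B hBsub)

lemma sign_lemma {n : ℕ} {r : Fin n → ℤ} (h : Unimodular (insert r (systemA n)))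
    (hc : ∀ i, r i = 0 ∨ r i = 1 ∨ r i = -1) (i j : Fin n) (hij : i ≠ j)
    (hi : r i ≠ 0) (hj : r j ≠ 0) : r i * r j = -1 := by
  by_contra hne
  have hii : r i * r i = 1 := by rcases hc i with h'|h'|h' <;> simp [h'] at hi ⊢
  have hprod : r i * r j = 1 := by
    rcases hc i with h'|h'|h' <;> rcases hc j with h''|h''|h'' <;>
      simp [h', h''] at hi hj hne ⊢
  have hrr : r i = r j := mul_left_cancel₀ hi (hii.trans hprod.symm)
  set B : Set (Fin n → ℤ) :=
    insert r (insert (Pi.single i 1 - Pi.single j 1)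
      {v | ∃ k, k ≠ i ∧ k ≠ j ∧ v = Pi.single k (1:ℤ)}) with hBdef
  have hBsub : B ⊆ insert r (systemA n) := by
    rintro b hb
    rcases hb with hb | hb | ⟨k, hk1, hk2, rfl⟩
    · exact hb ▸ Set.mem_insert _ _
    · exact hb ▸ Set.mem_insert_of_mem _ (Or.inr ⟨i, j, hij, rfl⟩)
    · exact Set.mem_insert_of_mem _ (Or.inl (Or.inr ⟨k, Or.inl rfl⟩))
  have hsum : ∑ k ∈ (Finset.univ.erase i).erase j, Pi.single k (r i * r k) ∈
      AddSubgroup.closure B := by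
    refine AddSubgroup.sum_mem _ (fun k hk => ?_)
    have hk1 : k ≠ j := Finset.ne_of_mem_erase hk
    have hk2 : k ≠ i := Finset.ne_of_mem_erase (Finset.mem_of_mem_erase hk)
    rw [← smul_single]
    exact AddSubgroup.zsmul_mem _ (AddSubgroup.subset_closure
      (Set.mem_insert_of_mem _ (Set.mem_insert_of_mem _
        (show Pi.single k (1:ℤ) ∈ {v : Fin n → ℤ | ∃ k, k ≠ i ∧ k ≠ j ∧ v = Pi.single k (1:ℤ)}
          from ⟨k, hk2, hk1, rfl⟩)))) _
  have e1 : ∑ k, Pi.single k (r i * r k) = (r i) • r := by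
    have := Finset.univ_sum_single (r i • r)
    simpa [Pi.smul_apply, smul_eq_mul] using this
  have e2 : ∑ k, Pi.single k (r i * r k) = Pi.single i (r i * r i) +
      (Pi.single j (r i * r j) + ∑ k ∈ (Finset.univ.erase i).erase j, Pi.single k (r i * r k)) := by
    rw [← Finset.add_sum_erase Finset.univ (fun k => Pi.single k (r i * r k)) (Finset.mem_univ i)]
    congr 1
    have hjmem : j ∈ Finset.univ.erase i := Finset.mem_erase.2 ⟨hij.symm, Finset.mem_univ j⟩
    rw [← Finset.add_sum_erase (Finset.univ.erase i) (fun k => Pi.single k (r i * r k)) hjmem]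
  have e3 : (Pi.single i (1:ℤ) : Fin n → ℤ) + Pi.single j 1 +
      ∑ k ∈ (Finset.univ.erase i).erase j, Pi.single k (r i * r k) = (r i) • r := by
    rw [add_assoc, show (Pi.single i (1:ℤ) : Fin n → ℤ) = Pi.single i (r i * r i) by rw [hii],
      show (Pi.single j (1:ℤ) : Fin n → ℤ) = Pi.single j (r i * r j) by rw [hprod]]
    exact e2.symm.trans e1
  have key : (Pi.single i (1:ℤ) : Fin n → ℤ) + Pi.single j 1 ∈ AddSubgroup.closure B := by
    rw [eq_sub_of_add_eq e3]
    exact AddSubgroup.sub_mem _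
      (AddSubgroup.zsmul_mem _ (AddSubgroup.subset_closure (Set.mem_insert _ _)) _) hsum
  have h2 : (2:ℕ) • (Pi.single i (1:ℤ) : Fin n → ℤ) ∈ AddSubgroup.closure B := by
    have : (2:ℕ) • (Pi.single i (1:ℤ) : Fin n → ℤ) =
        (Pi.single i 1 + Pi.single j 1) + (Pi.single i 1 - Pi.single j 1) := by
      rw [two_nsmul]; abel
    rw [this]
    exact AddSubgroup.add_mem _ key (AddSubgroup.subset_closure
      (Set.mem_insert_of_mem _ (Set.mem_insert _ _)))
  have h1 : (Pi.single i (1:ℤ) : Fin n → ℤ) ∉ AddSubgroup.closure B := by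
    refine not_mem_closure (AddMonoidHom.mk' (M := Fin n → ℤ)
      (fun v => ((v i + v j : ℤ) : ZMod 2)) (fun a b => by simp only [Pi.add_apply]; push_cast; ring)) ?_ ?_
    · rintro b hb
      rcases hb with hb | hb | ⟨k, hk1, hk2, rfl⟩
      · simp only [AddMonoidHom.mk'_apply]
        rw [hb, ← hrr, show r i + r i = 2 * r i by ring, ZMod.intCast_zmod_eq_zero_iff_dvd]
        push_cast
        exact dvd_mul_right 2 (r i)
      · subst hb
        simp [AddMonoidHom.mk'_apply, Pi.sub_apply, Pi.single_apply, hij, hij.symm]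
        decide
      · simp [AddMonoidHom.mk'_apply, Pi.single_apply, hk1.symm, hk2.symm,
          (Ne.symm hk1), (Ne.symm hk2)]
    · simp only [AddMonoidHom.mk'_apply, Pi.single_eq_same, Pi.single_eq_of_ne hij.symm]
      norm_num
  exact quot_not_torsionFree (by norm_num) h1 h2 (h B hBsub)
theorem systemA_maximal_unimodular (n : ℕ) (r : Fin n → ℤ)
    (h : Unimodular (insert r (systemA n))) :
    r ∈ systemA n ∧ (∀ i, r i = 0 ∨ r i = 1 ∨ r i = -1) ∧
      (∀ i j, i ≠ j → r i ≠ 0 → r j ≠ 0 → r i * r j = -1) := by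
  have hc : ∀ i, r i = 0 ∨ r i = 1 ∨ r i = -1 := fun i => coord_lemma h i
  have hs : ∀ i j, i ≠ j → r i ≠ 0 → r j ≠ 0 → r i * r j = -1 :=
    fun i j hij hi hj => sign_lemma h hc i j hij hi hj
  refine ⟨?_, hc, hs⟩
  by_cases h0 : ∀ i, r i = 0
  · have : r = 0 := funext h0
    exact Or.inl (Or.inl (by simp [this]))
  push_neg at h0
  obtain ⟨i, hi⟩ := h0
  by_cases hone : ∀ j, j ≠ i → r j = 0
  · rcases hc i with h' | h' | h'
    · exact absurd h' hi
    · refine Or.inl (Or.inr ⟨i, Or.inl (funext fun x => ?_)⟩)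
      by_cases hx : x = i
      · subst hx; rw [Pi.single_eq_same]; exact h'
      · rw [Pi.single_eq_of_ne hx]; exact hone x hx
    · refine Or.inl (Or.inr ⟨i, Or.inr (funext fun x => ?_)⟩)
      by_cases hx : x = i
      · subst hx; simp only [Pi.neg_apply, Pi.single_eq_same]; exact h'
      · simp only [Pi.neg_apply, Pi.single_eq_of_ne hx, neg_zero]; exact hone x hx
  push_neg at hone
  obtain ⟨j, hji, hj⟩ := hone
  have hij' : r i * r j = -1 := hs i j hji.symm hi hj
  have hzero : ∀ k, k ≠ i → k ≠ j → r k = 0 := by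
    intro k hki hkj
    by_contra hk
    have h1 := hs k i hki hk hi
    have h2 := hs k j hkj hk hj
    have heq : r i = r j := mul_left_cancel₀ hk (h1.trans h2.symm)
    rcases hc i with h' | h' | h' <;> rw [h', ← heq, h'] at hij' <;> omega
  rcases hc i with h' | h' | h'
  · exact absurd h' hi
  · have hj' : r j = -1 := by rw [h'] at hij'; linarith
    refine Or.inr ⟨i, j, hji.symm, funext fun x => ?_⟩
    by_cases hx : x = i
    · subst hx
      rw [Pi.sub_apply, Pi.single_eq_same, Pi.single_eq_of_ne hji.symm, sub_zero]
      exact h'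
    · by_cases hx' : x = j
      · subst hx'
        rw [Pi.sub_apply, Pi.single_eq_same, Pi.single_eq_of_ne hji, zero_sub]
        exact hj'
      · rw [Pi.sub_apply, Pi.single_eq_of_ne hx, Pi.single_eq_of_ne hx', sub_zero]
        exact hzero x hx hx'
  · have hj' : r j = 1 := by rw [h'] at hij'; linarith
    refine Or.inr ⟨j, i, hji, funext fun x => ?_⟩
    by_cases hx : x = i
    · subst hx
      rw [Pi.sub_apply, Pi.single_eq_same, Pi.single_eq_of_ne hji.symm, zero_sub]
      exact h'
    · by_cases hx' : x = j
      · subst hx'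
        rw [Pi.sub_apply, Pi.single_eq_same, Pi.single_eq_of_ne hji, sub_zero]
        exact hj'
      · rw [Pi.sub_apply, Pi.single_eq_of_ne hx, Pi.single_eq_of_ne hx', sub_zero]
        exact hzero x hx hx'
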